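/- arXiv:2005.09926 — 4 statements merged into one kernel-verified Lean document; each statement's English description precedes it below -/
import Mathlib

section
/- Let q be a prime with q ≡ 3 (mod 4) and F = ℚ(⁴√−q) (equivalently F = K(⁴√−q) with K = ℚ(√−q)). Then −1 is not a norm from F to K, i.e. −1 ∉ N_{F/K}(F^×). -/
open NumberField IntermediateField
open Polynomial


theorem descent_aux (q : ℕ) (hq : Nat.Prime q) (hq3 : q % 4 = 3) :
    ∀ n : ℕ, ∀ A B C D N : ℤ, N.natAbs = n →
      A^2 - q*B^2 + 2*q*C*D + N^2 = 0 → 2*A*B - C^2 + q*D^2 = 0 → N = 0 := by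
  haveI : Fact q.Prime := ⟨hq⟩
  have hq0 : (q : ℤ) ≠ 0 := by exact_mod_cast hq.ne_zero
  intro n
  induction n using Nat.strong_induction_on with
  | _ n ih =>
    intro A B C D N hn h1 h2
    by_contra hN0
    -- work in ZMod q
    have hqz : ((q : ℤ) : ZMod q) = 0 := by
      simp [ZMod.natCast_self]
    -- q ∣ N
    have hNq : ((N : ZMod q)) = 0 := by
      by_contra hNz
      have hsq : ((A : ZMod q) * (N : ZMod q)⁻¹) * ((A : ZMod q) * (N : ZMod q)⁻¹) = -1 := by
        have h1' : (A : ZMod q)^2 + (N : ZMod q)^2 = 0 := by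
          have := congrArg (Int.cast : ℤ → ZMod q) h1
          push_cast at this
          rw [show ((q:ℕ) : ZMod q) = 0 from ZMod.natCast_self q] at this
          linear_combination this
        have hNinv : (N : ZMod q) * (N : ZMod q)⁻¹ = 1 := ZMod.mul_inv_of_unit _ (Ne.isUnit hNz)
        have hA2 : (A : ZMod q)^2 = -((N : ZMod q)^2) := by linear_combination h1'
        have hre : ((A : ZMod q) * (N : ZMod q)⁻¹) * ((A : ZMod q) * (N : ZMod q)⁻¹)
            = (A : ZMod q)^2 * ((N : ZMod q)⁻¹ * (N : ZMod q)⁻¹) := by ring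
        rw [hre, hA2]
        linear_combination (-(N : ZMod q)*(N : ZMod q)⁻¹ - 1) * hNinv
      have : IsSquare (-1 : ZMod q) := ⟨_, hsq.symm⟩
      rw [ZMod.exists_sq_eq_neg_one_iff] at this
      exact this hq3
    have hNdvd : (q : ℤ) ∣ N := by rwa [ZMod.intCast_zmod_eq_zero_iff_dvd] at hNq
    -- q ∣ A
    have hAq : ((A : ZMod q)) = 0 := by
      have h1' : (A : ZMod q)^2 + (N : ZMod q)^2 = 0 := by
        have := congrArg (Int.cast : ℤ → ZMod q) h1
        push_cast at this
        rw [show ((q:ℕ) : ZMod q) = 0 from ZMod.natCast_self q] at this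
        linear_combination this
      rw [hNq] at h1'
      have : (A : ZMod q)^2 = 0 := by linear_combination h1'
      exact pow_eq_zero_iff (n := 2) (by norm_num) |>.mp this
    have hAdvd : (q : ℤ) ∣ A := by rwa [ZMod.intCast_zmod_eq_zero_iff_dvd] at hAq
    obtain ⟨A', rfl⟩ := hAdvd
    obtain ⟨N', rfl⟩ := hNdvd
    -- q ∣ C
    have hCq : ((C : ZMod q)) = 0 := by
      have h2' := congrArg (Int.cast : ℤ → ZMod q) h2
      push_cast at h2'
      rw [show ((q:ℕ) : ZMod q) = 0 from ZMod.natCast_self q] at h2'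
      have : (C : ZMod q)^2 = 0 := by linear_combination -h2'
      exact pow_eq_zero_iff (n := 2) (by norm_num) |>.mp this
    obtain ⟨C', rfl⟩ := (ZMod.intCast_zmod_eq_zero_iff_dvd _ _).mp hCq
    -- divide h1 by q
    have h1q : (q:ℤ) * A'^2 - B^2 + 2*q*C'*D + q * N'^2 = 0 := by
      apply mul_left_cancel₀ hq0
      linear_combination h1
    have hBq : ((B : ZMod q)) = 0 := by
      have h1'' := congrArg (Int.cast : ℤ → ZMod q) h1q
      push_cast at h1''
      rw [show ((q:ℕ) : ZMod q) = 0 from ZMod.natCast_self q] at h1''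
      have : (B : ZMod q)^2 = 0 := by linear_combination -h1''
      exact pow_eq_zero_iff (n := 2) (by norm_num) |>.mp this
    obtain ⟨B', rfl⟩ := (ZMod.intCast_zmod_eq_zero_iff_dvd _ _).mp hBq
    -- divide h2 by q
    have h2q : 2*q*A'*B' - q*C'^2 + D^2 = 0 := by
      apply mul_left_cancel₀ hq0
      linear_combination h2
    have hDq : ((D : ZMod q)) = 0 := by
      have h2'' := congrArg (Int.cast : ℤ → ZMod q) h2q
      push_cast at h2''
      rw [show ((q:ℕ) : ZMod q) = 0 from ZMod.natCast_self q] at h2''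
      have : (D : ZMod q)^2 = 0 := by linear_combination h2''
      exact pow_eq_zero_iff (n := 2) (by norm_num) |>.mp this
    obtain ⟨D', rfl⟩ := (ZMod.intCast_zmod_eq_zero_iff_dvd _ _).mp hDq
    -- new equations
    have new1 : A'^2 - q*B'^2 + 2*q*C'*D' + N'^2 = 0 := by
      apply mul_left_cancel₀ (pow_ne_zero 2 hq0)
      linear_combination h1
    have new2 : 2*A'*B' - C'^2 + q*D'^2 = 0 := by
      apply mul_left_cancel₀ (pow_ne_zero 2 hq0)
      linear_combination h2
    have hN'0 : N' ≠ 0 := by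
      intro h; exact hN0 (by rw [h, mul_zero])
    have hlt : N'.natAbs < n := by
      rw [← hn, Int.natAbs_mul]
      have h2le : 2 ≤ (q:ℤ).natAbs := by
        simpa using hq.two_le
      have := Int.natAbs_pos.mpr hN'0
      calc N'.natAbs < 2 * N'.natAbs := by omega
        _ ≤ (q:ℤ).natAbs * N'.natAbs := Nat.mul_le_mul_right _ h2le
    have := ih _ hlt A' B' C' D' N' rfl new1 new2
    exact hN'0 this



theorem quad_norm {k L : Type} [Field k] [Field L] [Algebra k L] (γ : L) (s : k)
    (hγ : γ ^ 2 = algebraMap k L s) (hs : ∀ b : k, b ^ 2 ≠ s)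
    (hadj : IntermediateField.adjoin k {γ} = ⊤) (x : L) :
    ∃ u v : k, x = algebraMap k L u + algebraMap k L v * γ ∧
      Algebra.norm k x = u ^ 2 - s * v ^ 2 := by
  have hirr : Irreducible (X ^ 2 - C s : k[X]) :=
    X_pow_sub_C_irreducible_of_prime Nat.prime_two hs
  have hmonic : (X ^ 2 - C s : k[X]).Monic := by
    apply monic_X_pow_sub_C _ (by norm_num)
  have hint : IsIntegral k γ := ⟨X ^ 2 - C s, hmonic, by simp [hγ]⟩
  have hmin : minpoly k γ = X ^ 2 - C s :=
    (minpoly.eq_of_irreducible_of_monic hirr (by simp [hγ]) hmonic).symm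
  let e : k⟮γ⟯ ≃ₐ[k] L := (IntermediateField.equivOfEq hadj).trans IntermediateField.topEquiv
  let pb : PowerBasis k L := (IntermediateField.adjoin.powerBasis hint).map e
  have hgen : pb.gen = γ := rfl
  have hdim : pb.dim = 2 := by
    show (minpoly k γ).natDegree = 2
    rw [hmin]
    compute_degree!
  let b : Module.Basis (Fin 2) k L := pb.basis.reindex (finCongr hdim)
  have hb : ∀ i : Fin 2, b i = γ ^ (i : ℕ) := by
    intro i
    simp [b, Module.Basis.reindex_apply, PowerBasis.coe_basis, hgen]
  have hb0 : b 0 = 1 := by rw [hb 0]; norm_num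
  have hb1 : b 1 = γ := by rw [hb 1]; norm_num
  set u := b.repr x 0 with hu
  set v := b.repr x 1 with hv
  have hrepr : ∀ (s t : k), b.repr (s • b 0 + t • b 1) = Finsupp.single 0 s + Finsupp.single 1 t := by
    intro s t
    simp [map_add, Finsupp.smul_single]
  have hx : x = algebraMap k L u + algebraMap k L v * γ := by
    have := b.sum_repr x
    rw [Fin.sum_univ_two] at this
    rw [← this, hb0, hb1, Algebra.smul_def, Algebra.smul_def, mul_one]
  refine ⟨u, v, hx, ?_⟩
  rw [Algebra.norm_eq_matrix_det b x, Matrix.det_fin_two]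
  have e00 : Algebra.leftMulMatrix b x 0 0 = u := by
    rw [Algebra.leftMulMatrix_eq_repr_mul, hb0, mul_one]
  have e10 : Algebra.leftMulMatrix b x 1 0 = v := by
    rw [Algebra.leftMulMatrix_eq_repr_mul, hb0, mul_one]
  have hxγ : x * b 1 = (v * s) • b 0 + u • b 1 := by
    rw [hb0, hb1, hx]
    rw [Algebra.smul_def, Algebra.smul_def, map_mul, mul_one]
    linear_combination (algebraMap k L v) * hγ
  have e01 : Algebra.leftMulMatrix b x 0 1 = v * s := by
    rw [Algebra.leftMulMatrix_eq_repr_mul, hxγ, hrepr]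
    simp [Finsupp.single_apply]
  have e11 : Algebra.leftMulMatrix b x 1 1 = u := by
    rw [Algebra.leftMulMatrix_eq_repr_mul, hxγ, hrepr]
    simp [Finsupp.single_apply]
  rw [e00, e01, e10, e11]
  ring

theorem quad_indep {k L : Type} [Field k] [Field L] [Algebra k L] (γ : L) (s : k)
    (hγ : γ ^ 2 = algebraMap k L s) (hs : ∀ b : k, b ^ 2 ≠ s)
    (u v : k) (h : algebraMap k L u + algebraMap k L v * γ = 0) :
    u = 0 ∧ v = 0 := by
  have hinj := (algebraMap k L).injective
  by_cases hv : v = 0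
  · subst hv
    simp only [map_zero, zero_mul, add_zero] at h
    exact ⟨hinj (by simpa using h), rfl⟩
  · exfalso
    have hvL : algebraMap k L v ≠ 0 := fun h0 => hv (hinj (by simpa using h0))
    have hγeq : γ = algebraMap k L (-(u / v)) := by
      rw [map_neg, map_div₀]
      field_simp
      linear_combination h
    apply hs (-(u / v))
    apply hinj
    rw [← hγ, hγeq, map_pow]



theorem rat_step (q : ℕ) (hq : Nat.Prime q) (hq3 : q % 4 = 3)
    (a b c d : ℚ) (h1 : a^2 - q*b^2 + 2*q*c*d + 1 = 0)
    (h2 : 2*a*b - c^2 + q*d^2 = 0) : False := by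
  have descent := descent_aux q hq hq3
  set N : ℤ := (a.den : ℤ) * b.den * c.den * d.den with hN
  have hN0 : N ≠ 0 := by
    simp [hN, a.den_nz, b.den_nz, c.den_nz, d.den_nz]
  set A : ℤ := a.num * b.den * c.den * d.den with hA
  set B : ℤ := (a.den : ℤ) * b.num * c.den * d.den with hB
  set C : ℤ := (a.den : ℤ) * b.den * c.num * d.den with hC
  set D : ℤ := (a.den : ℤ) * b.den * c.den * d.num with hD
  have key : ∀ r : ℚ, (r.num : ℚ) = r * r.den := by
    intro r
    have hden : (r.den : ℚ) ≠ 0 := by exact_mod_cast r.den_nz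
    have h := Rat.num_div_den r
    rwa [div_eq_iff hden] at h
  have ha : (A : ℚ) = a * N := by
    rw [hA, hN]; push_cast; rw [key a]; ring
  have hb : (B : ℚ) = b * N := by
    rw [hB, hN]; push_cast; rw [key b]; ring
  have hc : (C : ℚ) = c * N := by
    rw [hC, hN]; push_cast; rw [key c]; ring
  have hd : (D : ℚ) = d * N := by
    rw [hD, hN]; push_cast; rw [key d]; ring
  have e1 : A^2 - q*B^2 + 2*q*C*D + N^2 = 0 := by
    have : ((A^2 - q*B^2 + 2*q*C*D + N^2 : ℤ) : ℚ) = 0 := by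
      push_cast
      rw [ha, hb, hc, hd]
      linear_combination (N:ℚ)^2 * h1
    exact_mod_cast this
  have e2 : 2*A*B - C^2 + q*D^2 = 0 := by
    have : ((2*A*B - C^2 + q*D^2 : ℤ) : ℚ) = 0 := by
      push_cast
      rw [ha, hb, hc, hd]
      linear_combination (N:ℚ)^2 * h2
    exact_mod_cast this
  exact hN0 (descent N.natAbs A B C D N rfl e1 e2)

theorem no_rat_sqrt (q : ℕ) (hq : Nat.Prime q) (r : ℚ) : r^2 ≠ (q:ℚ) := by
  intro h
  have hirr := hq.irrational_sqrt
  apply hirr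
  have hr : ((r:ℝ))^2 = (q:ℝ) := by exact_mod_cast h
  have : Real.sqrt q = |(r:ℝ)| := by
    rw [← hr, Real.sqrt_sq_eq_abs]
  rw [this, ← Rat.cast_abs]
  exact ⟨|r|, rfl⟩

/-- Let `q` be a prime with `q ≡ 3 (mod 4)`, `K = ℚ(√−q)` and `F = K(⁴√−q)`.
Then `−1` is not a norm from `F` to `K`, i.e. `−1 ∉ N_{F/K}(F^×)`. -/
theorem neg_one_not_norm (q : ℕ) (hq : Nat.Prime q) (hq3 : q % 4 = 3)
    (K : Type) [Field K] [NumberField K] (β : K) (hβ : β ^ 2 = -(q : K))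
    (hK : IntermediateField.adjoin ℚ {β} = ⊤)
    (F : Type) [Field F] [NumberField F] [Algebra K F] (α : F)
    (hα : α ^ 2 = algebraMap K F β)
    (hF : IntermediateField.adjoin K {α} = ⊤) :
    ∀ x : F, Algebra.norm K x ≠ -1 := by
  intro x hx
  set P := algebraMap ℚ K with hP
  have hq0 : 0 < q := hq.pos
  -- -(q) is not a square in ℚ
  have hsQ : ∀ b : ℚ, b ^ 2 ≠ -(q : ℚ) := by
    intro b hb
    have h1 : (0:ℚ) ≤ b ^ 2 := sq_nonneg b
    have h2 : (0:ℚ) < (q:ℚ) := by exact_mod_cast hq0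
    rw [hb] at h1
    linarith
  have hβ' : β ^ 2 = P (-(q : ℚ)) := by
    rw [hβ, map_neg, map_natCast]
  -- β is not a square in K
  have hsK : ∀ b : K, b ^ 2 ≠ β := by
    intro b hb
    obtain ⟨a, b', hrep, -⟩ := quad_norm β (-(q:ℚ)) hβ' hsQ hK b
    have hb2 : (P a + P b' * β) ^ 2 = β := by rw [← hrep]; exact hb
    have key : P (a^2 - q*b'^2) + P (2*a*b' - 1) * β = 0 := by
      simp only [map_sub, map_add, map_mul, map_pow, map_one, map_ofNat, map_natCast]
      linear_combination hb2 - (P b')^2 * hβ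
    obtain ⟨he1, he2⟩ := quad_indep β (-(q:ℚ)) hβ' hsQ _ _ key
    have hb'0 : b' ≠ 0 := by
      intro h; rw [h] at he2; norm_num at he2
    apply no_rat_sqrt q hq (a / b')
    have : a^2 = q * b'^2 := by linarith [he1]
    field_simp
    linarith [this]
  -- norm computation in F
  obtain ⟨u, v, hxrep, hnorm⟩ := quad_norm α β hα hsK hF x
  rw [hx] at hnorm
  have heq : u ^ 2 - β * v ^ 2 = -1 := hnorm.symm
  -- represent u and v over ℚ
  obtain ⟨a, b, hu, -⟩ := quad_norm β (-(q:ℚ)) hβ' hsQ hK u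
  obtain ⟨c, d, hv, -⟩ := quad_norm β (-(q:ℚ)) hβ' hsQ hK v
  rw [hu, hv] at heq
  have key : P (a^2 - q*b^2 + 2*q*c*d + 1) + P (2*a*b - c^2 + q*d^2) * β = 0 := by
    simp only [map_sub, map_add, map_mul, map_pow, map_one, map_ofNat, map_natCast]
    linear_combination heq - ((P b)^2 - 2*(P c)*(P d) - (P d)^2 * β) * hβ
  obtain ⟨he1, he2⟩ := quad_indep β (-(q:ℚ)) hβ' hsQ _ _ key
  exact rat_step q hq hq3 a b c d he1 he2
end

section
/- Let q be a prime with q ≡ 3 (mod 8). Then the ring of integers of F = ℚ(⁴√−q) is 𝒪_K[⁴√−q], where K = ℚ(√−q); equivalently, 𝒪_F is generated over 𝒪_K by a root of x⁴ + q. -/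
open NumberField IntermediateField


open Polynomial

private lemma repr_of_sq {k L : Type*} [Field k] [Field L] [Algebra k L] {t : L} {c : k}
    (hc : t ^ 2 = algebraMap k L c) (htop : Algebra.adjoin k {t} = ⊤) (x : L) :
    ∃ u v : k, x = algebraMap k L u + algebraMap k L v * t := by
  have hx : x ∈ Algebra.adjoin k {t} := by rw [htop]; trivial
  rw [Algebra.adjoin_singleton_eq_range_aeval] at hx
  obtain ⟨p, hp⟩ := hx
  have hmonic : (X ^ 2 - C c).Monic := monic_X_pow_sub_C c (by norm_num)
  set r := p %ₘ (X ^ 2 - C c) with hr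
  have hdiv := modByMonic_add_div p (X ^ 2 - C c)
  have hroot : aeval t (X ^ 2 - C c) = 0 := by
    simp [map_sub, hc]
  have hx' : aeval t r = x := by
    rw [← hp, ← hdiv]
    simp [map_add, map_mul, hroot, hr]
  have hdeg : r.natDegree < 2 := by
    by_cases h0 : r = 0
    · simp [h0]
    · have h1 : r.degree < (X ^ 2 - C c).degree := degree_modByMonic_lt p hmonic
      have h2 : (X ^ 2 - C c).degree = 2 := degree_X_pow_sub_C (by norm_num) c
      rw [h2] at h1
      exact (natDegree_lt_iff_degree_lt h0).mpr (by exact_mod_cast h1)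
  refine ⟨r.coeff 0, r.coeff 1, ?_⟩
  rw [← hx', aeval_eq_sum_range' hdeg]
  simp [Finset.sum_range_succ, Algebra.smul_def]

private lemma indep_zero {k L : Type*} [Field k] [Field L] [Algebra k L] {t : L}
    (ht : t ∉ Set.range (algebraMap k L)) {u v : k}
    (h : algebraMap k L u + algebraMap k L v * t = 0) : u = 0 ∧ v = 0 := by
  by_cases hv : v = 0
  · refine ⟨?_, hv⟩
    rw [hv, map_zero, zero_mul, add_zero] at h
    exact (algebraMap k L).injective (by rw [h, map_zero])
  · exfalso
    apply ht
    refine ⟨-(u / v), ?_⟩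
    have hvL : algebraMap k L v ≠ 0 := by simpa using hv
    rw [map_neg, map_div₀]
    field_simp
    linear_combination -h

private lemma coeffs_integral {R k L : Type*} [CommRing R] [IsDomain R] [IsIntegrallyClosed R]
    [Field k] [Field L] [Algebra k L] [Algebra R k] [Algebra R L] [IsFractionRing R k]
    [IsScalarTower R k L] {t : L} {c : k} (hc : t ^ 2 = algebraMap k L c)
    (ht : t ∉ Set.range (algebraMap k L)) {x : L} (hx : IsIntegral R x)
    {u v : k} (hrepr : x = algebraMap k L u + algebraMap k L v * t) :
    (∃ s : R, algebraMap R k s = 2 * u) ∧ (∃ N : R, algebraMap R k N = u ^ 2 - v ^ 2 * c) := by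
  by_cases hv : v = 0
  · rw [hv, map_zero, zero_mul, add_zero] at hrepr
    have hu : IsIntegral R u := by
      have : IsIntegral R (algebraMap k L u) := hrepr ▸ hx
      exact this.tower_bot_of_field
    obtain ⟨s, hs⟩ := IsIntegrallyClosed.isIntegral_iff.mp hu
    exact ⟨⟨2 * s, by rw [map_mul, hs, map_ofNat]⟩,
           ⟨s ^ 2, by rw [map_pow, hs, hv]; ring⟩⟩
  · have hxK : x ∉ Set.range (algebraMap k L) := by
      rintro ⟨y, hy⟩
      apply ht
      refine ⟨(y - u) / v, ?_⟩
      have hvL : algebraMap k L v ≠ 0 := by simpa using hv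
      rw [map_div₀, map_sub]
      field_simp
      linear_combination hy + hrepr
    have hxint : IsIntegral k x := hx.tower_top
    set g : k[X] := X ^ 2 - C (2 * u) * X + C (u ^ 2 - v ^ 2 * c) with hg
    have hgmonic : g.Monic := by
      have hform : g = X ^ 2 - (C (2 * u) * X - C (u ^ 2 - v ^ 2 * c)) := by ring
      rw [hform]
      refine monic_X_pow_sub ?_
      refine lt_of_le_of_lt (degree_sub_le _ _) ?_
      rw [sup_lt_iff]
      constructor
      · exact lt_of_le_of_lt (degree_C_mul_X_le _) (by norm_num)
      · exact lt_of_le_of_lt degree_C_le (by norm_num)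
    have hgroot : (aeval x) g = 0 := by
      rw [hg, hrepr]
      simp only [map_add, map_sub, map_mul, map_pow, map_ofNat, aeval_X, aeval_C]
      linear_combination (algebraMap k L v) ^ 2 * hc
    have hdvd := minpoly.dvd k x hgroot
    have hgne : g ≠ 0 := hgmonic.ne_zero
    have hgdeg : g.natDegree = 2 := by
      have : g = C 1 * X ^ 2 + C (-(2*u)) * X + C (u ^ 2 - v ^ 2 * c) := by
        rw [hg]; simp [map_neg]; ring
      rw [this]
      exact natDegree_quadratic one_ne_zero
    obtain ⟨w, hw⟩ := hdvd
    have hmne : minpoly k x ≠ 0 := minpoly.ne_zero hxint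
    have hwne : w ≠ 0 := by rintro rfl; rw [mul_zero] at hw; exact hgne hw
    have hdeg_add : g.natDegree = (minpoly k x).natDegree + w.natDegree := by
      rw [hw, natDegree_mul hmne hwne]
    have hnd1 : (minpoly k x).natDegree ≠ 1 := by
      intro h1
      have : (minpoly k x).degree = 1 := by
        rw [degree_eq_natDegree hmne, h1]; rfl
      rw [minpoly.degree_eq_one_iff] at this
      exact hxK this
    have hndpos : 0 < (minpoly k x).natDegree := minpoly.natDegree_pos hxint
    have hwdeg : w.natDegree = 0 := by omega
    have hw0 : w = C (w.coeff 0) := eq_C_of_natDegree_eq_zero hwdeg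
    have hlead : (1:k) = w.coeff 0 := by
      have := congrArg leadingCoeff hw
      rwa [hgmonic.leadingCoeff, leadingCoeff_mul, (minpoly.monic hxint).leadingCoeff,
        one_mul, hw0, leadingCoeff_C] at this
    have hmin : minpoly k x = g := by
      rw [hw, hw0, ← hlead, map_one, mul_one]
    have hfrac := minpoly.isIntegrallyClosed_eq_field_fractions' (R := R) k (s := x) hx
    have hmapg : g = (minpoly R x).map (algebraMap R k) := by rw [← hmin, hfrac]
    have c1 : g.coeff 1 = -(2 * u) := by
      rw [hg]
      simp only [coeff_add, coeff_sub, coeff_X_pow, coeff_C_mul, coeff_X_one, coeff_C]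
      norm_num
    have c0 : g.coeff 0 = u ^ 2 - v ^ 2 * c := by
      rw [hg]
      simp only [coeff_add, coeff_sub, coeff_X_pow, coeff_C_mul, coeff_X_zero, coeff_C]
      norm_num
    constructor
    · refine ⟨-((minpoly R x).coeff 1), ?_⟩
      rw [map_neg]
      have := congrArg (fun p => p.coeff 1) hmapg
      simp only [coeff_map] at this
      rw [c1] at this
      rw [← this]; ring
    · refine ⟨(minpoly R x).coeff 0, ?_⟩
      have := congrArg (fun p => p.coeff 0) hmapg
      simp only [coeff_map] at this
      rw [c0] at this
      exact this.symm


private lemma core_arith (m2 n2 e2 f2 p r Q g h : ℤ)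
    (hm2 : m2 = 1 ∨ m2 = 9) (hn2 : n2 = 1 ∨ n2 = 9) (he2 : e2 = 1 ∨ e2 = 9)
    (hf2 : f2 = 1 ∨ f2 = 9)
    (hp : p = 1 ∨ p = 3 ∨ p = 5 ∨ p = 7) (hr : r = 1 ∨ r = 3 ∨ r = 5 ∨ r = 7)
    (hQ : Q = 3 ∨ Q = 11)
    (hs1 : p ^ 2 % 16 = (m2 * n2) % 16) (hs2 : r ^ 2 % 16 = (e2 * f2) % 16)
    (hX : (m2 - Q * n2 + 2 * r * Q) % 16 = (8 * g) % 16)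
    (hY : (2 * p - e2 + Q * f2) % 16 = (8 * h) % 16)
    (hgh : (g - h) % 2 = 0) : False := by
  rcases hm2 with rfl | rfl <;> rcases hn2 with rfl | rfl <;>
    rcases he2 with rfl | rfl <;> rcases hf2 with rfl | rfl <;>
    rcases hp with rfl | rfl | rfl | rfl <;> rcases hr with rfl | rfl | rfl | rfl <;>
    rcases hQ with rfl | rfl <;> omega

private lemma odd_sq16 (x : ℤ) (hx : x % 2 = 1) : x ^ 2 % 16 = 1 ∨ x ^ 2 % 16 = 9 := by
  obtain ⟨t, rfl⟩ : ∃ t, x = 2 * t + 1 := ⟨(x - 1) / 2, by omega⟩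
  obtain ⟨k, hk⟩ := Int.even_mul_succ_self t
  have h : (2 * t + 1) ^ 2 = 8 * k + 1 := by linear_combination 4 * hk
  omega

private lemma sq_congr16 (a b : ℤ) (h8 : (a - b) % 8 = 0) (h2 : (a + b) % 2 = 0) :
    (a ^ 2 - b ^ 2) % 16 = 0 := by
  obtain ⟨k, hk⟩ : (8:ℤ) ∣ a - b := by omega
  obtain ⟨l, hl⟩ : (2:ℤ) ∣ a + b := by omega
  have : a ^ 2 - b ^ 2 = 16 * (k * l) := by linear_combination (a + b) * hk + 8 * k * hl
  omega

private lemma hard_case (q m n e f g h : ℤ) (hq : q % 8 = 3)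
    (hm : m % 2 = 1) (hn : n % 2 = 1) (he : e % 2 = 1) (hf : f % 2 = 1)
    (hgh : (g - h) % 2 = 0)
    (h1 : m ^ 2 - q * n ^ 2 + 2 * e * f * q = 8 * g)
    (h2 : 2 * m * n - e ^ 2 + q * f ^ 2 = 8 * h) : False := by
  have hmn2 : (m * n) % 2 = 1 := by rw [Int.mul_emod, hm, hn]; decide
  have hef2 : (e * f) % 2 = 1 := by rw [Int.mul_emod, he, hf]; decide
  have hm16 := odd_sq16 m hm
  have hn16 := odd_sq16 n hn
  have he16 := odd_sq16 e he
  have hf16 := odd_sq16 f hf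
  have Em : m ^ 2 ≡ m ^ 2 % 16 [ZMOD 16] := (Int.emod_emod_of_dvd _ dvd_rfl).symm
  have En : n ^ 2 ≡ n ^ 2 % 16 [ZMOD 16] := (Int.emod_emod_of_dvd _ dvd_rfl).symm
  have Ee : e ^ 2 ≡ e ^ 2 % 16 [ZMOD 16] := (Int.emod_emod_of_dvd _ dvd_rfl).symm
  have Ef : f ^ 2 ≡ f ^ 2 % 16 [ZMOD 16] := (Int.emod_emod_of_dvd _ dvd_rfl).symm
  have Eq16 : q ≡ q % 16 [ZMOD 16] := (Int.emod_emod_of_dvd _ dvd_rfl).symm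
  have Ep : m * n ≡ (m * n) % 8 [ZMOD 8] := (Int.emod_emod_of_dvd _ dvd_rfl).symm
  have Er : e * f ≡ (e * f) % 8 [ZMOD 8] := (Int.emod_emod_of_dvd _ dvd_rfl).symm
  have Ep2 : 2 * (m * n) ≡ 2 * ((m * n) % 8) [ZMOD 16] := by
    have := Ep.mul_left' (c := 2); simpa using this
  have Er2 : 2 * (e * f) ≡ 2 * ((e * f) % 8) [ZMOD 16] := by
    have := Er.mul_left' (c := 2); simpa using this
  have hX : (m ^ 2 % 16 - q % 16 * (n ^ 2 % 16) + 2 * ((e * f) % 8) * (q % 16)) % 16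
      = (8 * g) % 16 := by
    have t1 : q % 16 * (n ^ 2 % 16) ≡ q * n ^ 2 [ZMOD 16] := (Eq16.mul En).symm
    have t2 : 2 * ((e * f) % 8) * (q % 16) ≡ 2 * e * f * q [ZMOD 16] :=
      ((Er2.mul Eq16).symm).trans (by rw [show 2 * (e * f) * q = 2 * e * f * q by ring])
    exact ((Em.symm.sub t1).add t2).trans (by rw [h1])
  have hY : (2 * ((m * n) % 8) - e ^ 2 % 16 + q % 16 * (f ^ 2 % 16)) % 16
      = (8 * h) % 16 := by
    have t1 : q % 16 * (f ^ 2 % 16) ≡ q * f ^ 2 [ZMOD 16] := (Eq16.mul Ef).symm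
    have t2 : 2 * ((m * n) % 8) ≡ 2 * m * n [ZMOD 16] :=
      (Ep2.symm).trans (by rw [show 2 * (m * n) = 2 * m * n by ring])
    exact ((t2.sub Ee.symm).add t1).trans (by rw [h2])
  have hs1 : ((m * n) % 8) ^ 2 % 16 = (m ^ 2 % 16 * (n ^ 2 % 16)) % 16 := by
    have c1 := sq_congr16 (m * n) ((m * n) % 8) (by omega) (by omega)
    have c2 : (m * n) ^ 2 % 16 = (m ^ 2 % 16 * (n ^ 2 % 16)) % 16 := by
      rw [mul_pow]; exact Em.mul En
    omega
  have hs2 : ((e * f) % 8) ^ 2 % 16 = (e ^ 2 % 16 * (f ^ 2 % 16)) % 16 := by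
    have c1 := sq_congr16 (e * f) ((e * f) % 8) (by omega) (by omega)
    have c2 : (e * f) ^ 2 % 16 = (e ^ 2 % 16 * (f ^ 2 % 16)) % 16 := by
      rw [mul_pow]; exact Ee.mul Ef
    omega
  exact core_arith (m ^ 2 % 16) (n ^ 2 % 16) (e ^ 2 % 16) (f ^ 2 % 16)
    ((m * n) % 8) ((e * f) % 8) (q % 16) g h hm16 hn16 he16 hf16
    (by omega) (by omega) (by omega) hs1 hs2 hX hY hgh

private lemma odd_sq8 (x : ℤ) (hx : x % 2 = 1) : x ^ 2 % 8 = 1 := by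
  have := odd_sq16 x hx; omega

private lemma sq_par (x : ℤ) : x ^ 2 % 2 = x % 2 := by
  obtain ⟨k, hk⟩ := Int.even_mul_succ_self x
  have : x ^ 2 = x + 2 * (k - x) := by linear_combination hk
  omega

/-- The key integer arithmetic lemma. -/
private lemma key_arith (q m n e f g h : ℤ) (hq : q % 8 = 3)
    (hmn : (m - n) % 2 = 0) (hef : (e - f) % 2 = 0) (hgh : (g - h) % 2 = 0)
    (h1 : m ^ 2 - q * n ^ 2 + 2 * e * f * q = 8 * g)
    (h2 : 2 * m * n - e ^ 2 + q * f ^ 2 = 8 * h) :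
    m % 2 = 0 ∧ (m - n) % 4 = 0 ∧ e % 2 = 0 ∧ (e - f) % 4 = 0 := by
  by_cases hm : m % 2 = 0
  · by_cases he : e % 2 = 0
    · -- all even
      obtain ⟨m', rfl⟩ : ∃ m', m = 2 * m' := ⟨m / 2, by omega⟩
      obtain ⟨n', rfl⟩ : ∃ n', n = 2 * n' := ⟨n / 2, by omega⟩
      obtain ⟨e', rfl⟩ : ∃ e', e = 2 * e' := ⟨e / 2, by omega⟩
      obtain ⟨f', rfl⟩ : ∃ f', f = 2 * f' := ⟨f / 2, by omega⟩
      have h1' : m' ^ 2 - q * n' ^ 2 + 2 * (e' * f' * q) = 2 * g := by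
        have h4 : (4:ℤ) * (m' ^ 2 - q * n' ^ 2 + 2 * (e' * f' * q)) = 4 * (2 * g) := by
          linear_combination h1
        exact mul_left_cancel₀ (by norm_num) h4
      have h2' : 2 * (m' * n') - e' ^ 2 + q * f' ^ 2 = 2 * h := by
        have h4 : (4:ℤ) * (2 * (m' * n') - e' ^ 2 + q * f' ^ 2) = 4 * (2 * h) := by
          linear_combination h2
        exact mul_left_cancel₀ (by norm_num) h4
      have pm := sq_par m'
      have pn := sq_par n'
      have pe := sq_par e'
      have pf := sq_par f'
      have pqn : (q * n' ^ 2) % 2 = n' % 2 := by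
        rw [Int.mul_emod, pn]
        have : q % 2 = 1 := by omega
        rw [this]; omega
      have pqf : (q * f' ^ 2) % 2 = f' % 2 := by
        rw [Int.mul_emod, pf]
        have : q % 2 = 1 := by omega
        rw [this]; omega
      refine ⟨by omega, ?_, by omega, ?_⟩ <;> omega
    · -- m even, e odd : contradiction via h2 mod 8
      exfalso
      obtain ⟨m', rfl⟩ : ∃ m', m = 2 * m' := ⟨m / 2, by omega⟩
      obtain ⟨n', rfl⟩ : ∃ n', n = 2 * n' := ⟨n / 2, by omega⟩
      have he8 := odd_sq8 e (by omega)
      have hf8 := odd_sq8 f (by omega)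
      have hqf : (q * f ^ 2) % 8 = 3 := by rw [Int.mul_emod, hq, hf8]; decide
      have h2' : q * f ^ 2 - e ^ 2 = 8 * (h - m' * n') := by linear_combination h2
      omega
  · by_cases he : e % 2 = 0
    · -- m odd, e even : contradiction via h1 mod 8
      exfalso
      obtain ⟨e', rfl⟩ : ∃ e', e = 2 * e' := ⟨e / 2, by omega⟩
      obtain ⟨f', rfl⟩ : ∃ f', f = 2 * f' := ⟨f / 2, by omega⟩
      have hm8 := odd_sq8 m (by omega)
      have hn8 := odd_sq8 n (by omega)
      have hqn : (q * n ^ 2) % 8 = 3 := by rw [Int.mul_emod, hq, hn8]; decide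
      have h1' : m ^ 2 - q * n ^ 2 = 8 * (g - e' * f' * q) := by linear_combination h1
      omega
    · -- all odd : the hard case
      exact absurd (hard_case q m n e f g h hq (by omega) (by omega) (by omega) (by omega)
        hgh h1 h2) (by simp)


open NumberField IntermediateField Polynomial

private lemma sq_par' (x : ℤ) : x ^ 2 % 2 = x % 2 := by
  obtain ⟨k, hk⟩ := Int.even_mul_succ_self x
  have : x ^ 2 = x + 2 * (k - x) := by linear_combination hk
  omega

/-- Let `q` be a prime with `q ≡ 3 (mod 8)`. Then the ring of integers of
`F = ℚ(⁴√−q)` is `𝒪_K[⁴√−q]`, where `K = ℚ(√−q)`. -/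
theorem ringOfIntegers_eq_adjoin (q : ℕ) (hq : Nat.Prime q) (hq8 : q % 8 = 3)
    (K : Type) [Field K] [NumberField K] (β : K) (hβ : β ^ 2 = -(q : K))
    (hK : IntermediateField.adjoin ℚ {β} = ⊤)
    (F : Type) [Field F] [NumberField F] [Algebra K F] (α : F)
    (hα : α ^ 2 = algebraMap K F β)
    (hF : IntermediateField.adjoin K {α} = ⊤)
    (a : 𝓞 F) (ha : (a : F) = α) :
    Algebra.adjoin (𝓞 K) {a} = ⊤ := by
  have hq1 : 1 < q := hq.one_lt
  have hq0 : (0:ℚ) < q := by exact_mod_cast hq.pos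
  have hqz8 : (q:ℤ) % 8 = 3 := by omega
  have hqK : (q : K) ≠ 0 := Nat.cast_ne_zero.mpr hq.ne_zero
  have hβ0 : β ≠ 0 := by
    intro h
    rw [h] at hβ
    exact hqK (by linear_combination hβ)
  -- β is integral over ℤ
  have hβ_int : IsIntegral ℤ β := by
    refine ⟨X ^ 2 - C (-(q:ℤ)), monic_X_pow_sub
      (lt_of_le_of_lt degree_C_le (by norm_num : (0 : WithBot ℕ) < 2)), ?_⟩
    simp only [eval₂_sub, eval₂_pow, eval₂_X, eval₂_C, eval₂_neg, eval₂_natCast,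
      map_neg, map_natCast]
    linear_combination hβ
  have hβQ_int : IsIntegral ℚ β := hβ_int.tower_top
  have hK' : Algebra.adjoin ℚ {β} = ⊤ := by
    have h1 := IntermediateField.adjoin_simple_toSubalgebra_of_isAlgebraic (α := β) hβQ_int.isAlgebraic
    rw [hK] at h1
    rw [← h1, IntermediateField.top_toSubalgebra]
  have hcβ : β ^ 2 = algebraMap ℚ K (-(q:ℚ)) := by
    rw [map_neg, map_natCast]; exact hβ
  have hβnot : β ∉ Set.range (algebraMap ℚ K) := by
    rintro ⟨r, hr⟩
    have h2 : algebraMap ℚ K (r ^ 2) = algebraMap ℚ K (-(q:ℚ)) := by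
      rw [map_pow, hr, ← hcβ]
    have h3 : r ^ 2 = -(q:ℚ) := (algebraMap ℚ K).injective h2
    nlinarith [sq_nonneg r]
  -- q is not a rational square
  have hq_rat : ∀ r : ℚ, r ^ 2 ≠ (q:ℚ) := by
    intro r hr
    have hint : IsIntegral ℤ r := by
      refine ⟨X ^ 2 - C (q:ℤ), monic_X_pow_sub
        (lt_of_le_of_lt degree_C_le (by norm_num : (0 : WithBot ℕ) < 2)), ?_⟩
      simp only [eval₂_sub, eval₂_pow, eval₂_X, eval₂_C, eval₂_natCast, map_natCast]
      linear_combination hr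
    obtain ⟨z, hz⟩ := IsIntegrallyClosed.isIntegral_iff.mp hint
    rw [eq_intCast] at hz
    have hz2 : z ^ 2 = (q:ℤ) := by
      have : ((z:ℚ)) ^ 2 = ((q:ℤ):ℚ) := by rw [hz, hr]; push_cast; ring
      exact_mod_cast this
    have hnat : z.natAbs ^ 2 = q := by
      have : (z ^ 2).natAbs = ((q:ℤ)).natAbs := by rw [hz2]
      rwa [Int.natAbs_pow, Int.natAbs_natCast] at this
    have hd : z.natAbs ∣ q := ⟨z.natAbs, by rw [← hnat]; ring⟩
    rcases hq.eq_one_or_self_of_dvd _ hd with h1 | h1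
    · rw [h1] at hnat; simp at hnat; omega
    · rw [h1] at hnat; nlinarith
  -- α not in K
  have hαnot : α ∉ Set.range (algebraMap K F) := by
    rintro ⟨γ, hγ⟩
    have hγ2 : γ ^ 2 = β := by
      apply (algebraMap K F).injective
      rw [map_pow, hγ, hα]
    obtain ⟨cc, dd, hcd⟩ := repr_of_sq hcβ hK' γ
    have hexp : algebraMap ℚ K (cc ^ 2 - q * dd ^ 2) + algebraMap ℚ K (2 * cc * dd - 1) * β = 0 := by
      simp only [map_sub, map_mul, map_pow, map_one, map_ofNat, map_natCast]
      rw [hcd] at hγ2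
      linear_combination hγ2 - (algebraMap ℚ K dd) ^ 2 * hβ
    obtain ⟨h1, h2⟩ := indep_zero hβnot hexp
    have hdd0 : dd ≠ 0 := by
      intro hdd; rw [hdd] at h2; norm_num at h2
    apply hq_rat (cc / dd)
    field_simp
    linear_combination h1
  -- θ = (1+β)/2 is integral over ℤ
  obtain ⟨c₀, hc₀⟩ : ∃ c₀ : ℤ, (q:ℤ) + 1 = 4 * c₀ := ⟨((q:ℤ) + 1) / 4, by omega⟩
  set θ : K := algebraMap ℚ K (1/2) * (1 + β) with hθdef
  have hhalf : algebraMap ℚ K (1/2) * 2 = 1 := by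
    rw [show (2:K) = algebraMap ℚ K 2 from (map_ofNat _ 2).symm, ← map_mul]
    norm_num
  have hθ2 : θ * 2 = 1 + β := by
    calc θ * 2 = (algebraMap ℚ K (1/2) * 2) * (1 + β) := by rw [hθdef]; ring
      _ = 1 + β := by rw [hhalf, one_mul]
  have hθint : IsIntegral ℤ θ := by
    refine ⟨X ^ 2 - (X - C c₀), monic_X_pow_sub (by
      rw [degree_X_sub_C]; norm_num), ?_⟩
    simp only [eval₂_sub, eval₂_pow, eval₂_X, eval₂_C]
    rw [eq_intCast (algebraMap ℤ K) c₀]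
    have hc₀K : (q:K) + 1 = 4 * ((c₀ : ℤ) : K) := by exact_mod_cast congrArg (fun z : ℤ => (z : K)) hc₀
    linear_combination ((2*θ + β - 1)/4) * hθ2 + (1/4) * hβ - (1/4) * hc₀K
  -- backward: integer coordinates give integral elements
  have mk_int : ∀ (z : K) (m n : ℤ), (m - n) % 2 = 0 → z * 2 = (m:K) + (n:K) * β →
      IsIntegral ℤ z := by
    intro z m n hmn hz
    obtain ⟨w, hw⟩ : ∃ w : ℤ, m - n = 2 * w := ⟨(m - n) / 2, by omega⟩
    have hwK : (m:K) - (n:K) = 2 * (w:K) := by exact_mod_cast congrArg (fun z : ℤ => (z : K)) hw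
    have hzval : z = (w:K) + (n:K) * θ := by
      apply mul_right_cancel₀ (two_ne_zero (α := K))
      calc z * 2 = (m:K) + (n:K) * β := hz
        _ = (w:K) * 2 + (n:K) * (1 + β) := by linear_combination hwK
        _ = (w:K) * 2 + (n:K) * (θ * 2) := by rw [hθ2]
        _ = ((w:K) + (n:K) * θ) * 2 := by ring
    rw [hzval]
    have hwint : IsIntegral ℤ ((w:K)) := by
      rw [← eq_intCast (algebraMap ℤ K) w]; exact isIntegral_algebraMap
    have hnint : IsIntegral ℤ ((n:K)) := by
      rw [← eq_intCast (algebraMap ℤ K) n]; exact isIntegral_algebraMap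
    exact hwint.add (hnint.mul hθint)
  -- forward: integral elements have half-integer coordinates
  have coords : ∀ z : K, IsIntegral ℤ z →
      ∃ m n : ℤ, (m - n) % 2 = 0 ∧ z * 2 = (m:K) + (n:K) * β := by
    intro z hz
    obtain ⟨u, v, huv⟩ := repr_of_sq hcβ hK' z
    obtain ⟨⟨s, hs⟩, ⟨N, hN⟩⟩ := coeffs_integral hcβ hβnot hz huv
    rw [eq_intCast] at hs hN
    have hM : (q:ℚ) * (2*v) ^ 2 = 4 * (N:ℚ) - (s:ℚ) ^ 2 := by
      linear_combination (-4) * hN + ((s:ℚ) + 2 * u) * hs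
    have hint : IsIntegral ℤ ((q:ℚ) * (2*v)) := by
      refine ⟨X ^ 2 - C ((q:ℤ) * (4 * N - s ^ 2)), monic_X_pow_sub
        (lt_of_le_of_lt degree_C_le (by norm_num : (0 : WithBot ℕ) < 2)), ?_⟩
      simp only [eval₂_sub, eval₂_pow, eval₂_X, eval₂_C]
      rw [eq_intCast]
      push_cast
      linear_combination (q:ℚ) * hM
    obtain ⟨z₁, hz₁⟩ := IsIntegrallyClosed.isIntegral_iff.mp hint
    rw [eq_intCast] at hz₁
    have hz₁sq : z₁ ^ 2 = (q:ℤ) * ((q:ℤ) * (4 * N - s ^ 2) - (q:ℤ) * (4 * N - s ^ 2) + (4 * N - s ^ 2)) := by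
      have : ((z₁:ℚ)) ^ 2 = (((q:ℤ) * (4 * N - s ^ 2) : ℤ) : ℚ) := by
        rw [hz₁]
        push_cast
        linear_combination (q:ℚ) * hM
      have h9 : z₁ ^ 2 = (q:ℤ) * (4 * N - s ^ 2) := by exact_mod_cast this
      rw [h9]; ring
    have hqz : (q:ℤ) ∣ z₁ := by
      have hqprime : Prime (q:ℤ) := Nat.prime_iff_prime_int.mp hq
      exact hqprime.dvd_of_dvd_pow (n := 2) ⟨_, hz₁sq⟩
    obtain ⟨n, hn⟩ := hqz
    have hrn : 2 * v = (n:ℚ) := by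
      have h1 : (q:ℚ) * (2 * v) = (q:ℚ) * (n:ℚ) := by
        rw [← hz₁, hn]; push_cast; ring
      exact mul_left_cancel₀ (ne_of_gt hq0) h1
    refine ⟨s, n, ?_, ?_⟩
    · have hsq : s ^ 2 + (q:ℤ) * n ^ 2 = 4 * N := by
        have : ((s:ℚ)) ^ 2 + (q:ℚ) * ((n:ℚ)) ^ 2 = 4 * ((N:ℤ):ℚ) := by
          rw [← hrn, hs]
          linear_combination (-4) * hN
        exact_mod_cast this
      have pm := sq_par' s
      have pn := sq_par' n
      have pqn : ((q:ℤ) * n ^ 2) % 2 = n % 2 := by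
        rw [Int.mul_emod, show (q:ℤ) % 2 = 1 by omega, pn, one_mul, Int.emod_emod_of_dvd _ dvd_rfl]
      omega
    · have hsK : ((s:ℤ):K) = 2 * algebraMap ℚ K u := by
        rw [← map_intCast (algebraMap ℚ K), hs, map_mul, map_ofNat]
      have hnK : ((n:ℤ):K) = 2 * algebraMap ℚ K v := by
        rw [← map_intCast (algebraMap ℚ K), ← hrn, map_mul, map_ofNat]
      rw [huv, hsK, hnK]
      ring
  -- b = β as an element of 𝓞 K is prime
  set b : 𝓞 K := ⟨β, hβ_int⟩ with hbdef
  have hbcoe : (algebraMap (𝓞 K) K) b = β := rfl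
  have hbsq : b ^ 2 = algebraMap ℤ (𝓞 K) (-(q:ℤ)) := by
    refine NumberField.RingOfIntegers.eq_iff.mp ?_
    rw [RingOfIntegers.coe_eq_algebraMap, RingOfIntegers.coe_eq_algebraMap, map_pow, hbcoe,
      eq_intCast (algebraMap ℤ (𝓞 K)), map_intCast]
    push_cast
    exact hβ
  have hminβ : minpoly ℚ β = X ^ 2 - C (-(q:ℚ)) := by
    refine (minpoly.eq_of_irreducible_of_monic
      (X_pow_sub_C_irreducible_of_prime Nat.prime_two ?_) ?_
      (monic_X_pow_sub_C _ two_ne_zero)).symm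
    · intro r hr
      have : r ^ 2 = -(q:ℚ) := hr
      nlinarith [sq_nonneg r]
    · simp only [map_sub, map_pow, aeval_X, aeval_C]
      rw [hcβ]; ring
  have hfinrank : Module.finrank ℚ K = 2 := by
    have h1 : Module.finrank ℚ (IntermediateField.adjoin ℚ {β}) = 2 := by
      rw [IntermediateField.adjoin.finrank hβQ_int, hminβ, natDegree_X_pow_sub_C]
    rw [hK, IntermediateField.finrank_top'] at h1
    exact h1
  have hrankZ : Module.finrank ℤ (𝓞 K) = 2 := by
    rw [NumberField.RingOfIntegers.rank]; exact hfinrank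
  have hnormq : Algebra.norm ℤ (algebraMap ℤ (𝓞 K) (-(q:ℤ))) = (-(q:ℤ)) ^ 2 := by
    rw [Algebra.norm_algebraMap_of_basis (Module.Free.chooseBasis ℤ (𝓞 K))]
    congr 1
    rw [← Module.finrank_eq_card_chooseBasisIndex]
    exact hrankZ
  have habs : Ideal.absNorm (Ideal.span {b}) = q := by
    have h2 : (Ideal.absNorm (Ideal.span {b})) ^ 2 = q ^ 2 := by
      rw [Ideal.absNorm_span_singleton]
      have h3 : (Algebra.norm ℤ b) ^ 2 = ((q:ℤ)) ^ 2 := by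
        rw [← map_pow, hbsq, hnormq]; ring
      calc (Algebra.norm ℤ b).natAbs ^ 2 = ((Algebra.norm ℤ b) ^ 2).natAbs := by
            rw [Int.natAbs_pow]
        _ = (((q:ℤ)) ^ 2).natAbs := by rw [h3]
        _ = q ^ 2 := by rw [Int.natAbs_pow, Int.natAbs_natCast]
    exact Nat.pow_left_injective (by norm_num) h2
  have hbne : b ≠ 0 := by
    intro h
    apply hβ0
    rw [← hbcoe, h, map_zero]
  have hbprime : Prime b := Ideal.prime_of_irreducible_absNorm_span hbne
    (by rw [habs]; exact (Nat.irreducible_iff_nat_prime _).mpr hq)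
  -- α is integral over K, F = K[α]
  have hαint : IsIntegral K α := by
    refine ⟨X ^ 2 - C β, monic_X_pow_sub_C _ two_ne_zero, ?_⟩
    simp only [eval₂_sub, eval₂_pow, eval₂_X, eval₂_C]
    rw [hα]; ring
  have hF' : Algebra.adjoin K {α} = ⊤ := by
    have h1 := IntermediateField.adjoin_simple_toSubalgebra_of_isAlgebraic (α := α) hαint.isAlgebraic
    rw [hF] at h1
    rw [← h1, IntermediateField.top_toSubalgebra]
  -- main argument
  rw [eq_top_iff]
  rintro y -
  have hxint : IsIntegral ℤ ((y : F)) := y.isIntegral_coe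
  have hxOK : IsIntegral (𝓞 K) ((y : F)) := hxint.tower_top
  obtain ⟨u, v, huv⟩ := repr_of_sq hα hF' (y : F)
  obtain ⟨⟨s, hs⟩, ⟨N, hN⟩⟩ := coeffs_integral hα hαnot hxOK huv
  -- 2vβ is integral; get w with w = 2v
  have hDcoe : ((algebraMap (𝓞 K) K) (s ^ 2 - 4 * N)) = 4 * v ^ 2 * β := by
    rw [map_sub, map_mul, map_pow, hs, hN, map_ofNat]
    ring
  have ht₁ : (2 * v * β) ^ 2 = ((algebraMap (𝓞 K) K) (s ^ 2 - 4 * N)) * β := by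
    rw [hDcoe]; ring
  have hvβint : IsIntegral ℤ (2 * v * β) := by
    apply IsIntegral.of_pow (n := 2) (by norm_num)
    rw [ht₁]
    exact ((s ^ 2 - 4 * N).isIntegral_coe).mul hβ_int
  set t₁ : 𝓞 K := ⟨2 * v * β, hvβint⟩ with ht₁def
  have ht₁sq : t₁ ^ 2 = (s ^ 2 - 4 * N) * b := by
    refine NumberField.RingOfIntegers.eq_iff.mp ?_
    rw [RingOfIntegers.coe_eq_algebraMap, map_pow, RingOfIntegers.coe_eq_algebraMap, map_mul, hbcoe]
    exact ht₁
  obtain ⟨w, hw⟩ := hbprime.dvd_of_dvd_pow (n := 2) ⟨s ^ 2 - 4 * N, by rw [ht₁sq]; ring⟩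
  have hwv : (algebraMap (𝓞 K) K) w = 2 * v := by
    have hcoe : 2 * v * β = β * ((algebraMap (𝓞 K) K) w) := by
      have h5 := congrArg (algebraMap (𝓞 K) K) hw
      rw [map_mul, hbcoe] at h5
      simp only [ht₁def, RingOfIntegers.map_mk] at h5
      exact h5
    apply mul_right_cancel₀ hβ0
    linear_combination -hcoe
  -- coordinates
  obtain ⟨m, n, hmn, hmS⟩ := coords ((algebraMap (𝓞 K) K) s) s.isIntegral_coe
  obtain ⟨e, f, hef, heS⟩ := coords ((algebraMap (𝓞 K) K) w) w.isIntegral_coe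
  obtain ⟨g, h, hgh, hgS⟩ := coords ((algebraMap (𝓞 K) K) N) N.isIntegral_coe
  have heq : ((algebraMap (𝓞 K) K) s) ^ 2 - ((algebraMap (𝓞 K) K) w) ^ 2 * β
      = 4 * (algebraMap (𝓞 K) K) N := by
    rw [hs, hwv, hN]; ring
  have h16 : ((m:K) + (n:K) * β) ^ 2 - ((e:K) + (f:K) * β) ^ 2 * β = 8 * ((g:K) + (h:K) * β) := by
    rw [← hmS, ← heS, ← hgS]
    linear_combination 4 * heq
  have hsplit : (((m^2 - q*n^2 + 2*e*f*q - 8*g : ℤ)) : K)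
      + (((2*m*n - e^2 + q*f^2 - 8*h : ℤ)) : K) * β = 0 := by
    push_cast
    linear_combination h16 + (2*(e:K)*(f:K) - (n:K)^2 + (f:K)^2 * β) * hβ
  have hAB : (m^2 - q*n^2 + 2*e*f*q - 8*g : ℤ) = 0 ∧ (2*m*n - e^2 + q*f^2 - 8*h : ℤ) = 0 := by
    have hmem := indep_zero hβnot (u := ((m^2 - q*n^2 + 2*e*f*q - 8*g : ℤ) : ℚ))
      (v := ((2*m*n - e^2 + q*f^2 - 8*h : ℤ) : ℚ))
      (by rw [map_intCast, map_intCast]; exact hsplit)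
    exact ⟨by exact_mod_cast hmem.1, by exact_mod_cast hmem.2⟩
  obtain ⟨h2m, h4mn, h2e, h4ef⟩ := key_arith (q:ℤ) m n e f g h hqz8 hmn hef hgh
    (by linear_combination hAB.1) (by linear_combination hAB.2)
  -- u and v are integral
  obtain ⟨m', hm'⟩ : ∃ m', m = 2 * m' := ⟨m / 2, by omega⟩
  obtain ⟨n', hn'⟩ : ∃ n', n = 2 * n' := ⟨n / 2, by omega⟩
  obtain ⟨e', he'⟩ : ∃ e', e = 2 * e' := ⟨e / 2, by omega⟩
  obtain ⟨f', hf'⟩ : ∃ f', f = 2 * f' := ⟨f / 2, by omega⟩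
  have hu2 : u * 2 = (m':K) + (n':K) * β := by
    apply mul_right_cancel₀ (two_ne_zero (α := K))
    calc u * 2 * 2 = (2 * u) * 2 := by ring
      _ = ((algebraMap (𝓞 K) K) s) * 2 := by rw [hs]
      _ = (m:K) + (n:K) * β := hmS
      _ = ((m':K) + (n':K) * β) * 2 := by
          rw [hm', hn']; push_cast; ring
  have hv2 : v * 2 = (e':K) + (f':K) * β := by
    apply mul_right_cancel₀ (two_ne_zero (α := K))
    calc v * 2 * 2 = (2 * v) * 2 := by ring
      _ = ((algebraMap (𝓞 K) K) w) * 2 := by rw [hwv]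
      _ = (e:K) + (f:K) * β := heS
      _ = ((e':K) + (f':K) * β) * 2 := by
          rw [he', hf']; push_cast; ring
  have huint : IsIntegral ℤ u := mk_int u m' n' (by omega) hu2
  have hvint : IsIntegral ℤ v := mk_int v e' f' (by omega) hv2
  -- assemble
  have hy : y = algebraMap (𝓞 K) (𝓞 F) ⟨u, huint⟩ + algebraMap (𝓞 K) (𝓞 F) ⟨v, hvint⟩ * a := by
    refine NumberField.RingOfIntegers.eq_iff.mp ?_
    have hUF : ∀ z : 𝓞 K, (algebraMap (𝓞 F) F) ((algebraMap (𝓞 K) (𝓞 F)) z)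
        = algebraMap K F ((algebraMap (𝓞 K) K) z) := by
      intro z
      rw [← IsScalarTower.algebraMap_apply (𝓞 K) (𝓞 F) F,
        IsScalarTower.algebraMap_apply (𝓞 K) K F]
    simp only [RingOfIntegers.coe_eq_algebraMap, RingOfIntegers.coe_eq_algebraMap, map_add, map_mul,
      hUF, hUF, RingOfIntegers.map_mk, RingOfIntegers.map_mk]
    rw [show (algebraMap (𝓞 F) F) a = α from ha]
    exact huv
  rw [hy]
  exact add_mem (Subalgebra.algebraMap_mem _ _)
    (mul_mem (Subalgebra.algebraMap_mem _ _) (Algebra.subset_adjoin (Set.mem_singleton a)))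
end

section
/- Let q be a prime with q ≡ 15 (mod 16) and let 𝔭 be a prime of K = ℚ(√−q) above 2 chosen so that the induced embedding K ↪ ℚ₂ sends √−q to an element ≡ 7 mod 8. Then the completion of F = K(⁴√−q) at the prime 𝔓 above 𝔭 is ℚ₂(√−1), i.e. F_𝔓 = ℚ₂(i). -/
open NumberField IntermediateField

open Polynomial in
lemma sq_root_of_one_add_eight (d : ℤ_[2]) : ∃ z : ℤ_[2], z ^ 2 = 1 + 8 * d := by
  have h2 : ‖(2 : ℤ_[2])‖ = 1 / 2 := by
    simpa using PadicInt.norm_p (p := 2)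
  obtain ⟨z, hz, -⟩ := hensels_lemma (p := 2) (F := X ^ 2 - C (1 + 8 * d)) (a := 1) (by
    have h8 : ‖(8 : ℤ_[2])‖ = 1 / 8 := by
      have : (8 : ℤ_[2]) = 2 ^ 3 := by norm_num
      rw [this, norm_pow, h2]; norm_num
    have heval : (X ^ 2 - C (1 + 8 * d)).eval 1 = -(8 * d) := by
      simp
    have hderiv : (Polynomial.derivative (X ^ 2 - C (1 + 8 * d))).eval 1 = 2 := by
      simp; norm_num
    rw [Polynomial.coe_aeval_eq_eval, heval, hderiv, h2, norm_neg]
    calc ‖8 * d‖ ≤ ‖(8:ℤ_[2])‖ * 1 := by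
          rw [norm_mul]; gcongr; exact PadicInt.norm_le_one d
      _ = 1/8 := by rw [h8, mul_one]
      _ < (1/2)^2 := by norm_num)
  refine ⟨z, ?_⟩
  have := hz
  simp only [Polynomial.coe_aeval_eq_eval, Polynomial.eval_sub, Polynomial.eval_pow, Polynomial.eval_X, Polynomial.eval_C] at this
  exact sub_eq_zero.mp this

/-- Let `q ≡ 15 (mod 16)` be prime and let `𝔭` be the prime of `K = ℚ(√−q)` above `2`
chosen so that the induced embedding `σ : K ↪ ℚ₂` sends `√−q` to an element `≡ 7 mod 8`.
Then the completion `L` of `F = K(⁴√−q)` at the prime `𝔓` above `𝔭` is `ℚ₂(√−1)`,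
i.e. `F_𝔓 = ℚ₂(i)`. -/
theorem completion_eq_Q2_adjoin_i (q : ℕ) (hq : Nat.Prime q) (hq16 : q % 16 = 15)
    (K : Type) [Field K] [NumberField K] (β : K) (hβ : β ^ 2 = -(q : K))
    (hK : IntermediateField.adjoin ℚ {β} = ⊤)
    (F : Type) [Field F] [NumberField F] [Algebra K F] (α : F)
    (hα : α ^ 2 = algebraMap K F β)
    (hF : IntermediateField.adjoin K {α} = ⊤)
    -- the embedding `σ : K ↪ ℚ₂` induced by `𝔭`, with `σ(√−q) ≡ 7 mod 8`
    (σ : K →+* ℚ_[2]) (hσ : ∃ c : ℤ_[2], σ β = 7 + 8 * (c : ℚ_[2]))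
    -- `L` together with `ι` is the completion of `F` at the prime `𝔓` above `𝔭`
    (L : Type) [NormedField L] [CompleteSpace L] [Algebra ℚ_[2] L]
    (hisom : ∀ x : ℚ_[2], ‖algebraMap ℚ_[2] L x‖ = ‖x‖)
    (ι : F →+* L) (hdense : DenseRange ι)
    (hcompat : ∀ x : K, ι (algebraMap K F x) = algebraMap ℚ_[2] L (σ x)) :
    ∃ j : L, j ^ 2 = -1 ∧ Algebra.adjoin ℚ_[2] {j} = ⊤ := by
  obtain ⟨c, hc⟩ := hσ
  -- β ≠ 0, hence σ β ≠ 0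
  have hβ0 : β ≠ 0 := by
    intro h
    rw [h] at hβ
    have : (q : K) = 0 := by
      have := hβ.symm
      simpa using this
    exact_mod_cast hq.ne_zero (by exact_mod_cast this)
  have hσβ0 : σ β ≠ 0 := fun h => hβ0 (σ.injective (h.trans (map_zero σ).symm))
  -- a square root of `-(σ β)` in `ℚ₂`
  obtain ⟨z, hz⟩ := sq_root_of_one_add_eight (-(1 + c))
  have hzsq : ((z : ℚ_[2])) ^ 2 = -(σ β) := by
    have : ((z ^ 2 : ℤ_[2]) : ℚ_[2]) = ((1 + 8 * (-(1 + c)) : ℤ_[2]) : ℚ_[2]) := by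
      exact_mod_cast congrArg _ hz
    have h8 : ((8 : ℤ_[2]) : ℚ_[2]) = 8 := rfl
    push_cast at this
    rw [this, hc, h8]
    ring
  have hz0 : (z : ℚ_[2]) ≠ 0 := by
    intro h
    rw [h] at hzsq
    apply hσβ0
    have h0 : (0 : ℚ_[2]) = -σ β := by simpa using hzsq
    exact neg_eq_zero.mp h0.symm
  -- the candidate square root of `-1` in `L`
  set u : L := algebraMap ℚ_[2] L (z : ℚ_[2]) with hu
  have hu0 : u ≠ 0 := fun h => hz0 ((algebraMap ℚ_[2] L).injective (h.trans (map_zero _).symm))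
  set j : L := u⁻¹ * ι α with hj
  have hια : (ι α) ^ 2 = algebraMap ℚ_[2] L (σ β) := by
    rw [← map_pow, hα, hcompat]
  have hj2 : j ^ 2 = -1 := by
    have hu2 : u ^ 2 = algebraMap ℚ_[2] L (-(σ β)) := by
      rw [hu, ← map_pow, hzsq]
    rw [hj, mul_pow, inv_pow, hu2, hια, map_neg, inv_neg, neg_mul,
      inv_mul_cancel₀ (fun h => hσβ0 ((algebraMap ℚ_[2] L).injective (h.trans (map_zero _).symm)))]
  -- `L` is a normed `ℚ₂`-vector space
  letI : NormedSpace ℚ_[2] L :=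
    { norm_smul_le := fun x y => by rw [Algebra.smul_def, norm_mul, hisom] }
  -- the subalgebra generated by `j`
  set A : Subalgebra ℚ_[2] L := Algebra.adjoin ℚ_[2] {j} with hA
  have hjint : IsIntegral ℚ_[2] j := by
    refine ⟨Polynomial.X ^ 2 + Polynomial.C 1, Polynomial.monic_X_pow_add_C _ two_ne_zero, ?_⟩
    simp [hj2]
  haveI hAfd : FiniteDimensional ℚ_[2] (Subalgebra.toSubmodule A) := by
    exact (Submodule.fg_iff_finiteDimensional _).mp hjint.fg_adjoin_singleton
  have hclosed : IsClosed (A : Set L) :=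
    (Subalgebra.toSubmodule A).closed_of_finiteDimensional
  -- `ι α ∈ A`
  have hαA : ι α ∈ A := by
    have : ι α = u * j := by
      rw [hj, ← mul_assoc, mul_inv_cancel₀ hu0, one_mul]
    rw [this]
    exact A.mul_mem (A.algebraMap_mem _) (Algebra.subset_adjoin rfl)
  -- `α` is integral over `K` (it is a root of `X⁴ + q`)
  have hαint : IsIntegral K α := by
    refine ⟨Polynomial.X ^ 4 + Polynomial.C (q : K),
      Polynomial.monic_X_pow_add_C _ four_ne_zero, ?_⟩
    · have hα4 : α ^ 4 = -(q : F) := by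
        have : α ^ 4 = (α ^ 2) ^ 2 := by ring
        rw [this, hα, ← map_pow, hβ]
        push_cast
        simp
      simp [Polynomial.eval₂_eq_eval_map, hα4]
  -- every element of `F` is a `K`-polynomial in `α`
  have hFα : ∀ x : F, x ∈ Algebra.adjoin K {α} := by
    intro x
    have h1 : (IntermediateField.adjoin K {α}).toSubalgebra = Algebra.adjoin K {α} := by
      have := IntermediateField.adjoin_simple_toSubalgebra_of_isAlgebraic hαint.isAlgebraic
      simpa using this
    rw [← h1, hF]
    trivial
  -- the range of `ι` lies in `A`
  have hrange : ∀ x : F, ι x ∈ A := by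
    intro x
    refine Algebra.adjoin_induction ?_ ?_ ?_ ?_ (hFα x)
    · rintro y rfl
      exact hαA
    · intro k
      rw [hcompat]
      exact A.algebraMap_mem _
    · intro y z _ _ hy hz
      rw [map_add]; exact A.add_mem hy hz
    · intro y z _ _ hy hz
      rw [map_mul]; exact A.mul_mem hy hz
  -- `A` is closed and contains a dense set, hence is everything
  have htop : A = ⊤ := by
    have hsub : Set.range ι ⊆ (A : Set L) := by
      rintro _ ⟨x, rfl⟩; exact hrange x
    have : (Set.univ : Set L) ⊆ (A : Set L) := by
      have h1 : closure (Set.range ι) = Set.univ := hdense.closure_range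
      calc (Set.univ : Set L) = closure (Set.range ι) := h1.symm
        _ ⊆ closure (A : Set L) := closure_mono hsub
        _ = (A : Set L) := hclosed.closure_eq
    exact Algebra.eq_top_iff.mpr fun x => this (Set.mem_univ x)
  exact ⟨j, hj2, htop⟩
end

section
/- Let q be a prime with q ≡ 3 (mod 8), F = ℚ(⁴√−q), and 𝔓 the unique prime of F above 2. Then the completed local field F_𝔓 does not contain a square root of −1. -/
open NumberField IntermediateField

private noncomputable def NV (k : ℤ) : ℝ := (2 : ℝ) ^ (-(k : ℝ) / 2)

private lemma NV_pos (k : ℤ) : 0 < NV k := Real.rpow_pos_of_pos two_pos _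

private lemma NV_anti {a b : ℤ} (h : a ≤ b) : NV b ≤ NV a := by
  unfold NV
  apply (Real.rpow_le_rpow_left_iff one_lt_two).mpr
  have : (a : ℝ) ≤ (b : ℝ) := by exact_mod_cast h
  linarith

private lemma NV_lt {a b : ℤ} (h : a < b) : NV b < NV a := by
  unfold NV
  apply (Real.rpow_lt_rpow_left_iff one_lt_two).mpr
  have : (a : ℝ) < (b : ℝ) := by exact_mod_cast h
  linarith

private lemma NV_mul (a b : ℤ) : NV a * NV b = NV (a + b) := by
  unfold NV
  rw [← Real.rpow_add two_pos]
  congr 1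
  push_cast
  ring

private lemma NV_zero : NV 0 = 1 := by
  unfold NV
  norm_num

/-- Let `q ≡ 3 (mod 8)` be prime, `F = ℚ(⁴√−q)` and `𝔓` the unique prime of `F` above
`2`. Then the completed local field `F_𝔓` does not contain a square root of `−1`. -/
theorem no_sqrt_neg_one_in_completion (q : ℕ) (hq : Nat.Prime q) (hq8 : q % 8 = 3)
    (F : Type) [Field F] [NumberField F] (α : F) (hα : α ^ 4 = -(q : F))
    (hF : IntermediateField.adjoin ℚ {α} = ⊤)
    (𝔓 : Ideal (𝓞 F)) (h𝔓 : 𝔓.IsPrime) (h2 : Ideal.span {(2 : 𝓞 F)} = 𝔓 ^ 2)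
    -- `L` together with `ι` and `v` is the completion `F_𝔓` of `F` at `𝔓`
    (L : Type) [NormedField L] [CompleteSpace L] [IsUltrametricDist L] [CharZero L]
    (v : L → ℤ)
    (hmul : ∀ x y : L, x ≠ 0 → y ≠ 0 → v (x * y) = v x + v y)
    (hnorm : ∀ x : L, x ≠ 0 → ‖x‖ = (2 : ℝ) ^ (-(v x : ℝ) / 2))
    (ι : F →+* L) (hdense : DenseRange ι)
    (hcomp : ∀ x : 𝓞 F, x ≠ 0 → ∀ n : ℕ, ((n : ℤ) ≤ v (ι (x : F)) ↔ x ∈ 𝔓 ^ n)) :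
    ∀ x : L, x ^ 2 ≠ -1 := by
  intro x hx
  have h2L : (2 : L) ≠ 0 := two_ne_zero
  -- basic norm/valuation facts
  have hnv : ∀ z : L, z ≠ 0 → ‖z‖ = NV (v z) := by
    intro z hz
    unfold NV
    exact hnorm z hz
  have hNle : ∀ (z : L) (k : ℤ), (z = 0 ∨ k ≤ v z) → ‖z‖ ≤ NV k := by
    intro z k hzk
    rcases eq_or_ne z 0 with h0 | h0
    · rw [h0, norm_zero]
      exact (NV_pos k).le
    · rw [hnv z h0]
      apply NV_anti
      rcases hzk with h | h
      · exact absurd h h0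
      · exact h
  have hvge : ∀ (z : L) (k : ℤ), z ≠ 0 → ‖z‖ ≤ NV k → k ≤ v z := by
    intro z k hz h
    by_contra hc
    push_neg at hc
    rw [hnv z hz] at h
    exact absurd h (not_le.mpr (NV_lt hc))
  have hv1 : v (1 : L) = 0 := by
    have h := hmul 1 1 one_ne_zero one_ne_zero
    rw [one_mul] at h
    omega
  have hvneg : ∀ z : L, z ≠ 0 → v (-z) = v z := by
    intro z hz
    have hm1 : v (-1 : L) = 0 := by
      have h := hmul (-1) (-1) (neg_ne_zero.mpr one_ne_zero) (neg_ne_zero.mpr one_ne_zero)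
      rw [neg_mul_neg, one_mul] at h
      omega
    have h := hmul (-1) z (neg_ne_zero.mpr one_ne_zero) hz
    rw [neg_one_mul] at h
    omega
  have hmin : ∀ a b : L, a ≠ 0 → b ≠ 0 → a + b ≠ 0 → min (v a) (v b) ≤ v (a + b) := by
    intro a b ha hb hab
    have h := IsUltrametricDist.norm_add_le_max a b
    apply hvge _ _ hab
    rcases le_total (v a) (v b) with hle | hle
    · rw [min_eq_left hle]
      refine h.trans (max_le ?_ ?_)
      · exact hNle a _ (Or.inr le_rfl)
      · exact hNle b _ (Or.inr hle)
    · rw [min_eq_right hle]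
      refine h.trans (max_le ?_ ?_)
      · exact hNle a _ (Or.inr hle)
      · exact hNle b _ (Or.inr le_rfl)
  have hdiff : ∀ a b : L, a ≠ 0 → b ≠ 0 → v a < v b → a + b ≠ 0 ∧ v (a + b) = v a := by
    intro a b ha hb hab
    have hne : a + b ≠ 0 := by
      intro h
      have h' : a = -b := by linear_combination h
      rw [h', hvneg b hb] at hab
      exact lt_irrefl _ hab
    refine ⟨hne, ?_⟩
    have h1 : min (v a) (v b) ≤ v (a + b) := hmin a b ha hb hne
    have h2 : min (v (a + b)) (v (-b)) ≤ v a := by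
      have he : (a + b) + (-b) = a := by ring
      have := hmin (a + b) (-b) hne (neg_ne_zero.mpr hb) (by rw [he]; exact ha)
      rwa [he] at this
    rw [hvneg b hb] at h2
    omega
  -- integer valuation facts
  have hiota : ∀ z : ℤ, ι (((z : 𝓞 F) : F)) = (z : L) := by
    intro z
    rw [NumberField.RingOfIntegers.coe_eq_algebraMap, map_intCast (algebraMap (𝓞 F) F) z,
      map_intCast]
  have hv_int_nonneg : ∀ z : ℤ, z ≠ 0 → 0 ≤ v ((z : L)) := by
    intro z hz
    have hz' : (z : 𝓞 F) ≠ 0 := Int.cast_ne_zero.mpr hz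
    have h := (hcomp _ hz' 0).mpr (by rw [pow_zero, Ideal.one_eq_top]; exact Submodule.mem_top)
    rw [hiota z] at h
    exact_mod_cast h
  have hone_notmem : (1 : 𝓞 F) ∉ 𝔓 := fun h => h𝔓.ne_top ((Ideal.eq_top_iff_one 𝔓).mpr h)
  have h2mem : (2 : 𝓞 F) ∈ 𝔓 :=
    Ideal.pow_le_self two_ne_zero (h2 ▸ Ideal.mem_span_singleton_self (2 : 𝓞 F))
  have hvodd : ∀ z : ℤ, z % 2 = 1 → (z : L) ≠ 0 ∧ v ((z : L)) = 0 := by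
    intro z hz
    have hz0 : z ≠ 0 := by omega
    have hzL : (z : L) ≠ 0 := Int.cast_ne_zero.mpr hz0
    refine ⟨hzL, ?_⟩
    have h1 : ¬ ((1 : ℤ) ≤ v ((z : L))) := by
      intro h
      have hz' : (z : 𝓞 F) ≠ 0 := Int.cast_ne_zero.mpr hz0
      have hmem : (z : 𝓞 F) ∈ 𝔓 := by
        have h' := (hcomp _ hz' 1).mp (by rw [hiota z]; exact_mod_cast h)
        rwa [pow_one] at h'
      have hzz : (1 : 𝓞 F) = (z : 𝓞 F) - 2 * ((z / 2 : ℤ) : 𝓞 F) := by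
        have h' : (1 : ℤ) = z - 2 * (z / 2) := by omega
        have := congrArg (fun n : ℤ => ((n : 𝓞 F))) h'
        push_cast at this
        exact this
      apply hone_notmem
      rw [hzz]
      exact Ideal.sub_mem 𝔓 hmem (Ideal.mul_mem_right _ 𝔓 h2mem)
    have := hv_int_nonneg z hz0
    omega
  have hv2 : v (2 : L) = 2 := by
    have h2O : ((2 : ℤ) : 𝓞 F) ≠ 0 := Int.cast_ne_zero.mpr two_ne_zero
    have hc2 : (((2 : ℤ) : 𝓞 F)) = (2 : 𝓞 F) := by norm_num
    have hc2L : (((2 : ℤ) : L)) = (2 : L) := by norm_num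
    have hle : (2 : ℤ) ≤ v (2 : L) := by
      have h := (hcomp _ h2O 2).mpr (by rw [hc2, ← h2]; exact Ideal.mem_span_singleton_self _)
      rw [hiota 2, hc2L] at h
      exact_mod_cast h
    have hlt : ¬ ((3 : ℤ) ≤ v (2 : L)) := by
      intro h
      have hmem : ((2 : ℤ) : 𝓞 F) ∈ 𝔓 ^ 3 := by
        apply (hcomp _ h2O 3).mp
        rw [hiota 2, hc2L]
        exact_mod_cast h
      rw [hc2] at hmem
      have h3 : 𝔓 ^ 3 = Ideal.span {(2 : 𝓞 F)} * 𝔓 := by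
        rw [pow_succ, h2]
      rw [h3, Ideal.mem_span_singleton_mul] at hmem
      obtain ⟨y, hy, hy2⟩ := hmem
      have hy1 : y = 1 := by
        apply mul_left_cancel₀ (two_ne_zero : (2 : 𝓞 F) ≠ 0)
        rw [hy2, mul_one]
      exact hone_notmem (hy1 ▸ hy)
    omega
  -- the elements
  set j : ℕ := q / 8 with hjdef
  have hq4 : q = 8 * j + 3 := by omega
  set A : L := ι α with hAdef
  have hA4 : A ^ 4 = -((q : ℕ) : L) := by
    rw [hAdef, ← map_pow, hα, map_neg, map_natCast]
  have hqL : ((q : ℕ) : L) = 8 * (j : L) + 3 := by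
    rw [hq4]
    push_cast
    ring
  set w : L := (A ^ 2 - 1) / 2 with hwdef
  have h2w : 2 * w = A ^ 2 - 1 := by
    rw [hwdef]
    field_simp
  have hw : w ^ 2 + w + (2 * (j : L) + 1) = 0 := by
    have h4w : 4 * (w ^ 2 + w + (2 * (j : L) + 1)) = A ^ 4 + ((q : ℕ) : L) := by
      rw [hqL]
      linear_combination (2 * w + A ^ 2 + 1) * h2w
    have : (4 : L) ≠ 0 := by norm_num
    have h0 : A ^ 4 + ((q : ℕ) : L) = 0 := by rw [hA4]; ring
    rw [h0] at h4w
    linear_combination h4w / 4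
  have hj1odd : ((2 * (j : ℤ) + 1) : ℤ) % 2 = 1 := by omega
  have hcast1 : (((2 * (j : ℤ) + 1) : ℤ) : L) = 2 * (j : L) + 1 := by push_cast; ring
  have hwne : w ≠ 0 := by
    intro h0
    rw [h0] at hw
    have : (((2 * (j : ℤ) + 1) : ℤ) : L) = 0 := by rw [hcast1]; linear_combination hw
    have := Int.cast_eq_zero.mp this
    omega
  have hw1ne : w + 1 ≠ 0 := by
    intro h0
    have hwm : w = -1 := by linear_combination h0
    rw [hwm] at hw
    have : (((2 * (j : ℤ) + 1) : ℤ) : L) = 0 := by rw [hcast1]; linear_combination hw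
    have := Int.cast_eq_zero.mp this
    omega
  have hvw : v w = 0 ∧ v (w + 1) = 0 := by
    have hprod : w * (w + 1) = -(((2 * (j : ℤ) + 1) : ℤ) : L) := by
      rw [hcast1]
      linear_combination hw
    have hoddj := hvodd (2 * (j : ℤ) + 1) hj1odd
    have hsum : v w + v (w + 1) = 0 := by
      have h := hmul w (w + 1) hwne hw1ne
      rw [hprod, hvneg _ hoddj.1] at h
      omega
    rcases lt_trichotomy (v w) 0 with hc | hc | hc
    · exfalso
      have h1 : v (w + 1) = v w := by
        have := hdiff w 1 hwne one_ne_zero (by omega)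
        exact this.2
      omega
    · constructor
      · exact hc
      · omega
    · exfalso
      have h1 : v (1 + w) = 0 := by
        have := hdiff 1 w one_ne_zero hwne (by omega)
        omega
      rw [show (1 : L) + w = w + 1 by ring] at h1
      omega
  have hvw0 := hvw.1
  -- v (w - 1) = 0
  have hvw1 : w - 1 ≠ 0 ∧ v (w - 1) = 0 := by
    set e : L := w - 1 with hedef
    have he : e ^ 2 + 3 * e + (2 * (j : L) + 3) = 0 := by
      rw [hedef]
      linear_combination hw
    have hj3odd : ((2 * (j : ℤ) + 3) : ℤ) % 2 = 1 := by omega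
    have hcast3 : (((2 * (j : ℤ) + 3) : ℤ) : L) = 2 * (j : L) + 3 := by push_cast; ring
    have hoddj3 := hvodd (2 * (j : ℤ) + 3) hj3odd
    have hene : e ≠ 0 := by
      intro h0
      rw [h0] at he
      have : (((2 * (j : ℤ) + 3) : ℤ) : L) = 0 := by rw [hcast3]; linear_combination he
      have := Int.cast_eq_zero.mp this
      omega
    have h3odd := hvodd 3 (by norm_num)
    have h3L : ((3 : ℤ) : L) = (3 : L) := by norm_num
    have he3ne : e + 3 ≠ 0 := by
      intro h0
      have he' : e = -3 := by linear_combination h0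
      rw [he'] at he
      have : (((2 * (j : ℤ) + 3) : ℤ) : L) = 0 := by rw [hcast3]; linear_combination he
      have := Int.cast_eq_zero.mp this
      omega
    have hprod : e * (e + 3) = -(((2 * (j : ℤ) + 3) : ℤ) : L) := by
      rw [hcast3]
      linear_combination he
    have hsum : v e + v (e + 3) = 0 := by
      have h := hmul e (e + 3) hene he3ne
      rw [hprod, hvneg _ hoddj3.1] at h
      omega
    have hv3 : v ((3 : L)) = 0 := by rw [← h3L]; exact h3odd.2
    refine ⟨hene, ?_⟩
    rcases lt_trichotomy (v e) 0 with hc | hc | hc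
    · exfalso
      have h1 : v (e + 3) = v e := by
        have := hdiff e 3 hene (by rw [← h3L]; exact Int.cast_ne_zero.mpr (by norm_num)) (by omega)
        exact this.2
      omega
    · exact hc
    · exfalso
      have h1 : v (3 + e) = v (3 : L) := by
        have := hdiff 3 e (by rw [← h3L]; exact Int.cast_ne_zero.mpr (by norm_num)) hene (by omega)
        exact this.2
      rw [show (3 : L) + e = e + 3 by ring] at h1
      omega
  -- t = A - 1
  set t : L := A - 1 with htdef
  have hqne : ((q : ℕ) : L) + 1 ≠ 0 := by
    intro h0
    have : (((q : ℕ) + 1 : ℕ) : L) = 0 := by push_cast; linear_combination h0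
    have := Nat.cast_eq_zero.mp this
    omega
  have htne : t ≠ 0 := by
    intro h0
    have hA1 : A = 1 := by rw [htdef] at h0; linear_combination h0
    rw [hA1] at hA4
    apply hqne
    linear_combination hA4
  have ht2ne : t + 2 ≠ 0 := by
    intro h0
    have hA1 : A = -1 := by rw [htdef] at h0; linear_combination h0
    rw [hA1] at hA4
    apply hqne
    linear_combination hA4
  have ht2 : t ^ 2 = 2 * w - 2 * t := by
    rw [htdef]
    linear_combination h2w
  have hvt : v t = 1 := by
    have hprod : t * (t + 2) = 2 * w := by linear_combination ht2
    have hsum : v t + v (t + 2) = 2 := by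
      have h := hmul t (t + 2) htne ht2ne
      rw [hprod, hmul 2 w h2L hwne, hv2, hvw0] at h
      omega
    rcases lt_or_ge (v t) 2 with hc | hc
    · have h1 : v (t + 2) = v t := (hdiff t 2 htne h2L (by omega)).2
      omega
    · exfalso
      have h1 : min (v t) (v (2 : L)) ≤ v (t + 2) := hmin t 2 htne h2L ht2ne
      rw [hv2] at h1
      omega
  -- s = x - 1
  set s : L := x - 1 with hsdef
  have hsne : s ≠ 0 := by
    intro h0
    have hx1 : x = 1 := by rw [hsdef] at h0; linear_combination h0
    rw [hx1] at hx
    apply h2L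
    linear_combination hx
  have hs2ne : s + 2 ≠ 0 := by
    intro h0
    have hx1 : x = -1 := by rw [hsdef] at h0; linear_combination h0
    rw [hx1] at hx
    apply h2L
    linear_combination hx
  have hs2 : s ^ 2 = -2 - 2 * s := by
    rw [hsdef]
    linear_combination hx
  have hvs : v s = 1 := by
    have hprod : s * (s + 2) = -2 := by linear_combination hs2
    have hsum : v s + v (s + 2) = 2 := by
      have h := hmul s (s + 2) hsne hs2ne
      rw [hprod, hvneg 2 h2L, hv2] at h
      omega
    rcases lt_or_ge (v s) 2 with hc | hc
    · have h1 : v (s + 2) = v s := (hdiff s 2 hsne h2L (by omega)).2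
      omega
    · exfalso
      have h1 : min (v s) (v (2 : L)) ≤ v (s + 2) := hmin s 2 hsne h2L hs2ne
      rw [hv2] at h1
      omega
  -- key identity
  have hkey : w * s ^ 2 + t ^ 2 = t * s * (s - t) := by
    linear_combination (w - t) * hs2 + (1 + s) * ht2
  have hstne : s - t ≠ 0 := by
    intro h0
    have hst : s = t := by linear_combination h0
    rw [hst] at hkey
    have : t ^ 2 * (w + 1) = 0 := by linear_combination hkey
    rcases mul_eq_zero.mp this with h' | h'
    · exact htne (pow_eq_zero_iff (by norm_num) |>.mp h')
    · exact hw1ne h'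
  have hvst1 : 1 ≤ v (s - t) := by
    have h := hmin s (-t) hsne (neg_ne_zero.mpr htne) (by rw [← sub_eq_add_neg]; exact hstne)
    rw [← sub_eq_add_neg, hvneg t htne] at h
    omega
  have hkeyne : w * s ^ 2 + t ^ 2 ≠ 0 := by
    rw [hkey]
    exact mul_ne_zero (mul_ne_zero htne hsne) hstne
  have hvkey : 3 ≤ v (w * s ^ 2 + t ^ 2) := by
    rw [hkey]
    have h1 := hmul t s htne hsne
    have h2 := hmul (t * s) (s - t) (mul_ne_zero htne hsne) hstne
    rw [h2, h1, hvt, hvs]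
    omega
  -- 1 + w^3 decomposition
  have hcube : 1 + w ^ 3 = -(2 * (j : L)) * w + (2 * (j : L) + 2) := by
    linear_combination (w - 1) * hw
  have hw3 : ‖1 + w ^ 3‖ ≤ NV 2 := by
    rw [hcube]
    refine (IsUltrametricDist.norm_add_le_max _ _).trans (max_le ?_ ?_)
    · rcases Nat.eq_zero_or_pos j with hj0 | hjpos
      · have h00 : -(2 * (j : L)) * w = 0 := by rw [hj0]; norm_num
        rw [h00, norm_zero]
        exact (NV_pos 2).le
      · have hjne : (j : L) ≠ 0 := Nat.cast_ne_zero.mpr (by omega)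
        have hjv : 0 ≤ v ((j : L)) := by
          have hcj : ((j : ℤ) : L) = (j : L) := by push_cast; ring
          rw [← hcj]
          exact hv_int_nonneg _ (by omega)
        apply hNle
        right
        have he1 : -(2 * (j : L)) * w = -((2 * (j : L)) * w) := by ring
        rw [he1, hvneg _ (mul_ne_zero (mul_ne_zero h2L hjne) hwne),
          hmul _ w (mul_ne_zero h2L hjne) hwne, hmul 2 _ h2L hjne, hv2, hvw0]
        omega
    · apply hNle
      right
      have he2 : 2 * (j : L) + 2 = 2 * ((j : L) + 1) := by ring
      have hj1 : (j : L) + 1 = (((j : ℤ) + 1 : ℤ) : L) := by push_cast; ring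
      have hj1ne : (j : L) + 1 ≠ 0 := by
        rw [hj1]
        exact Int.cast_ne_zero.mpr (by omega)
      rw [he2, hmul 2 _ h2L hj1ne, hv2]
      have : 0 ≤ v ((j : L) + 1) := by
        rw [hj1]
        exact hv_int_nonneg _ (by omega)
      omega
  -- bound on s^2 - w^2 t^2
  have hvwinv : v w⁻¹ = 0 := by
    have h := hmul w w⁻¹ hwne (inv_ne_zero hwne)
    rw [mul_inv_cancel₀ hwne, hv1] at h
    omega
  have hvt2 : v (t ^ 2) = 2 := by
    have h := hmul t t htne htne
    rw [← sq] at h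
    omega
  have ht2norm : ‖t ^ 2‖ = NV 2 := by
    rw [hnv _ (pow_ne_zero 2 htne), hvt2]
  have hN3 : ‖s ^ 2 - w ^ 2 * t ^ 2‖ ≤ NV 3 := by
    have hid : s ^ 2 - w ^ 2 * t ^ 2 = w⁻¹ * ((w * s ^ 2 + t ^ 2) - (1 + w ^ 3) * t ^ 2) := by
      field_simp
      ring
    rw [hid, norm_mul]
    have hwinv : ‖w⁻¹‖ = 1 := by
      rw [hnv _ (inv_ne_zero hwne), hvwinv, NV_zero]
    rw [hwinv, one_mul, sub_eq_add_neg]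
    refine (IsUltrametricDist.norm_add_le_max _ _).trans (max_le ?_ ?_)
    · exact hNle _ _ (Or.inr hvkey)
    · rw [norm_neg, norm_mul, ht2norm]
      calc ‖1 + w ^ 3‖ * NV 2 ≤ NV 2 * NV 2 := by
            apply mul_le_mul_of_nonneg_right hw3 (NV_pos 2).le
        _ = NV 4 := NV_mul 2 2
        _ ≤ NV 3 := NV_anti (by omega)
  -- v (s - w t) ≥ 2 (or s = w t)
  have hwtne : w * t ≠ 0 := mul_ne_zero hwne htne
  have hvwt : v (w * t) = 1 := by
    rw [hmul w t hwne htne, hvw0, hvt]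
    norm_num
  have hP : ‖s - w * t‖ ≤ NV 2 := by
    apply hNle
    rcases eq_or_ne (s - w * t) 0 with h0 | h0
    · exact Or.inl h0
    right
    by_contra hc
    push_neg at hc
    have hv2wt : v (2 * (w * t)) = 3 := by
      rw [hmul 2 _ h2L hwtne, hv2, hvwt]
      norm_num
    have hsum : s + w * t = (s - w * t) + 2 * (w * t) := by ring
    have hd := hdiff (s - w * t) (2 * (w * t)) h0 (mul_ne_zero h2L hwtne) (by omega)
    have hswt : v (s + w * t) = v (s - w * t) := by rw [hsum]; exact hd.2
    have hswtne : s + w * t ≠ 0 := by rw [hsum]; exact hd.1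
    have hfact : s ^ 2 - w ^ 2 * t ^ 2 = (s - w * t) * (s + w * t) := by ring
    have h3 : (3 : ℤ) ≤ v (s ^ 2 - w ^ 2 * t ^ 2) := by
      apply hvge _ _ _ hN3
      rw [hfact]
      exact mul_ne_zero h0 hswtne
    rw [hfact, hmul _ _ h0 hswtne, hswt] at h3
    omega
  -- v (s - t) = 1
  have hvst : v (s - t) = 1 := by
    have hw1t : v ((w - 1) * t) = 1 := by
      rw [hmul _ t hvw1.1 htne, hvw1.2, hvt]
      norm_num
    have hsplit : s - t = (w - 1) * t + (s - w * t) := by ring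
    rcases eq_or_ne (s - w * t) 0 with h0 | h0
    · rw [hsplit, h0, add_zero, hw1t]
    · have hvP : 2 ≤ v (s - w * t) := hvge _ _ h0 hP
      have hd := hdiff ((w - 1) * t) (s - w * t) (mul_ne_zero hvw1.1 htne) h0 (by omega)
      rw [hsplit, hd.2, hw1t]
  -- final contradiction
  have hRHS : ‖t * s * (s - t)‖ = NV 3 := by
    rw [hnv _ (mul_ne_zero (mul_ne_zero htne hsne) hstne),
      hmul _ _ (mul_ne_zero htne hsne) hstne, hmul t s htne hsne, hvt, hvs, hvst]
    norm_num
  have hLHSid : w * s ^ 2 + t ^ 2 =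
      t ^ 2 * (1 + w ^ 3) + 2 * w ^ 2 * t * (s - w * t) + w * (s - w * t) ^ 2 := by
    ring
  have hLHS : ‖w * s ^ 2 + t ^ 2‖ ≤ NV 4 := by
    rw [hLHSid]
    refine (IsUltrametricDist.norm_add_le_max _ _).trans (max_le ((IsUltrametricDist.norm_add_le_max _ _).trans (max_le ?_ ?_)) ?_)
    · rw [norm_mul, ht2norm]
      calc NV 2 * ‖1 + w ^ 3‖ ≤ NV 2 * NV 2 :=
            mul_le_mul_of_nonneg_left hw3 (NV_pos 2).le
        _ = NV 4 := NV_mul 2 2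
    · rcases eq_or_ne (s - w * t) 0 with h0 | h0
      · rw [h0, mul_zero, norm_zero]
        exact (NV_pos 4).le
      · apply hNle
        right
        have hvP : 2 ≤ v (s - w * t) := hvge _ _ h0 hP
        have hne1 : 2 * w ^ 2 * t ≠ 0 :=
          mul_ne_zero (mul_ne_zero h2L (pow_ne_zero 2 hwne)) htne
        rw [hmul _ _ hne1 h0, hmul _ t (mul_ne_zero h2L (pow_ne_zero 2 hwne)) htne,
          hmul 2 _ h2L (pow_ne_zero 2 hwne), hv2, hvt]
        have hvw2 : v (w ^ 2) = 0 := by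
          have h := hmul w w hwne hwne
          rw [← sq] at h
          omega
        omega
    · rcases eq_or_ne (s - w * t) 0 with h0 | h0
      · rw [h0]
        simp [NV_pos 4 |>.le]
      · apply hNle
        right
        have hvP : 2 ≤ v (s - w * t) := hvge _ _ h0 hP
        have hvP2 : v ((s - w * t) ^ 2) = 2 * v (s - w * t) := by
          have h := hmul (s - w * t) (s - w * t) h0 h0
          rw [← sq] at h
          omega
        rw [hmul w _ hwne (pow_ne_zero 2 h0), hvw0, hvP2]
        omega
  have hfinal : NV 3 ≤ NV 4 := by
    rw [← hRHS, ← hkey]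
    exact hLHS
  exact absurd hfinal (not_le.mpr (NV_lt (by omega)))
end
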